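/- Let β ∈ ℂ∖(−∞,0] and define, for ζ ∈ ℂ∖(−∞,1], F_β(ζ) := β^{1/2} · ( (i + (ζ−1)^{1/2}) / (i − (ζ−1)^{1/2}) )^{log β / (2πi)}, where (ζ−1)^{1/2} is the principal square root, log β and β^{1/2} are principal, and the outer power w^{log β/(2πi)} = exp((log β/(2πi))·Log w) uses the principal logarithm (well-defined since (i+(ζ−1)^{1/2})/(i−(ζ−1)^{1/2}) lies in the lower half-plane). Then: (1) F_β is holomorphic and non-vanishing on ℂ∖(−∞,1]; (2) for x ∈ (−∞,0), the boundary values from above and below satisfy F_{β+}(x)·F_{β−}(x) = 1, and for x ∈ (0,1) they satisfy F_{β+}(x)·F_{β−}(x) = β; (3) F_β(ζ) = 1 + O(ζ^{−1/2}) as ζ → ∞, uniformly in ℂ∖(−∞,1]. -/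

import Mathlib

open Complex Filter Topology

noncomputable section

/-- The slit plane `ℂ ∖ (−∞,1]`. -/
def SlitPlane1 : Set ℂ := {ζ : ℂ | ¬(ζ.im = 0 ∧ ζ.re ≤ 1)}

/-- `F_β(ζ) = β^{1/2} ((i + (ζ−1)^{1/2})/(i − (ζ−1)^{1/2}))^{log β/(2πi)}`, all branches
principal. -/
def Ffun (β : ℂ) (ζ : ℂ) : ℂ :=
  β ^ ((1 : ℂ) / 2) *
    ((Complex.I + (ζ - 1) ^ ((1 : ℂ) / 2)) / (Complex.I - (ζ - 1) ^ ((1 : ℂ) / 2)))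
      ^ (Complex.log β / (2 * (Real.pi : ℂ) * Complex.I))

def sq1 (ζ : ℂ) : ℂ := (ζ - 1) ^ ((1 : ℂ) / 2)

def wfun (ζ : ℂ) : ℂ := (Complex.I + sq1 ζ) / (Complex.I - sq1 ζ)

lemma Ffun_eq (β ζ : ℂ) :
    Ffun β ζ = β ^ ((1 : ℂ) / 2) * (wfun ζ) ^ (Complex.log β / (2 * (Real.pi : ℂ) * Complex.I)) :=
  rfl

lemma mem_slitPlane_of_mem (ζ : ℂ) (h : ζ ∈ SlitPlane1) : ζ - 1 ∈ Complex.slitPlane := by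
  simp only [SlitPlane1, Set.mem_setOf_eq, not_and, not_le] at h
  simp only [Complex.mem_slitPlane_iff, Complex.sub_re, Complex.sub_im, Complex.one_re,
    Complex.one_im, sub_zero]
  by_cases him : ζ.im = 0
  · exact Or.inl (by linarith [h him])
  · exact Or.inr him

lemma re_sq1_pos (ζ : ℂ) (h : ζ ∈ SlitPlane1) : 0 < (sq1 ζ).re := by
  have hsp := mem_slitPlane_of_mem ζ h
  have hz : ζ - 1 ≠ 0 := Complex.slitPlane_ne_zero hsp
  rw [sq1, Complex.cpow_def_of_ne_zero hz, Complex.exp_re]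
  have him : (Complex.log (ζ - 1) * ((1:ℂ) / 2)).im = (ζ - 1).arg / 2 := by
    simp [Complex.mul_im, Complex.log_im, Complex.div_re, Complex.div_im]
    ring
  rw [him]
  have h1 : -Real.pi < (ζ - 1).arg := Complex.neg_pi_lt_arg _
  have h2 : (ζ - 1).arg < Real.pi := by
    rcases lt_of_le_of_ne (Complex.arg_le_pi _) (Complex.slitPlane_arg_ne_pi hsp) with h
    exact h
  have : 0 < Real.cos ((ζ - 1).arg / 2) := by
    apply Real.cos_pos_of_mem_Ioo
    constructor <;> [linarith; linarith]
  positivity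

section B
lemma denom_re_ne (ζ : ℂ) (h : ζ ∈ SlitPlane1) : (Complex.I - sq1 ζ).re ≠ 0 := by
  have := re_sq1_pos ζ h
  simp only [Complex.sub_re, Complex.I_re, zero_sub, ne_eq, neg_eq_zero]
  linarith

lemma denom_ne_zero (ζ : ℂ) (h : ζ ∈ SlitPlane1) : Complex.I - sq1 ζ ≠ 0 := by
  intro hc
  exact denom_re_ne ζ h (by rw [hc]; simp)

lemma im_wfun_neg (ζ : ℂ) (h : ζ ∈ SlitPlane1) : (wfun ζ).im < 0 := by
  have hre := re_sq1_pos ζ h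
  have hd := denom_ne_zero ζ h
  have hns : 0 < Complex.normSq (Complex.I - sq1 ζ) := by
    rwa [Complex.normSq_pos]
  rw [wfun, Complex.div_im]
  have hnum : (Complex.I + sq1 ζ).im * (Complex.I - sq1 ζ).re -
      (Complex.I + sq1 ζ).re * (Complex.I - sq1 ζ).im = -(2 * (sq1 ζ).re) := by
    simp [Complex.add_im, Complex.add_re, Complex.sub_re, Complex.sub_im]
    ring
  rw [div_sub_div_same, hnum]
  apply div_neg_of_neg_of_pos _ hns
  linarith

lemma wfun_slitPlane (ζ : ℂ) (h : ζ ∈ SlitPlane1) : wfun ζ ∈ Complex.slitPlane := by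
  exact Or.inr (ne_of_lt (im_wfun_neg ζ h))

lemma wfun_ne_zero (ζ : ℂ) (h : ζ ∈ SlitPlane1) : wfun ζ ≠ 0 :=
  Complex.slitPlane_ne_zero (wfun_slitPlane ζ h)

lemma diff_sq1 (ζ : ℂ) (h : ζ ∈ SlitPlane1) : DifferentiableAt ℂ sq1 ζ := by
  have : DifferentiableAt ℂ (fun z : ℂ => z - 1) ζ := by fun_prop
  exact this.cpow (differentiableAt_const _) (mem_slitPlane_of_mem ζ h)

lemma diff_wfun (ζ : ℂ) (h : ζ ∈ SlitPlane1) : DifferentiableAt ℂ wfun ζ := by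
  exact ((differentiableAt_const _).add (diff_sq1 ζ h)).div
    ((differentiableAt_const _).sub (diff_sq1 ζ h)) (denom_ne_zero ζ h)

lemma Ffun_diff (β : ℂ) : DifferentiableOn ℂ (Ffun β) SlitPlane1 := by
  intro ζ hζ
  apply DifferentiableAt.differentiableWithinAt
  have : DifferentiableAt ℂ
      (fun z => β ^ ((1:ℂ)/2) * (wfun z) ^ (Complex.log β / (2 * (Real.pi:ℂ) * Complex.I))) ζ := by
    apply (differentiableAt_const _).mul
    exact (diff_wfun ζ hζ).cpow (differentiableAt_const _) (wfun_slitPlane ζ hζ)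
  exact this

lemma Ffun_ne_zero (β : ℂ) (hβ0 : β ≠ 0) (ζ : ℂ) (h : ζ ∈ SlitPlane1) : Ffun β ζ ≠ 0 := by
  rw [Ffun_eq]
  apply mul_ne_zero
  · rw [Complex.cpow_def_of_ne_zero hβ0]; exact Complex.exp_ne_zero _
  · rw [Complex.cpow_def_of_ne_zero (wfun_ne_zero ζ h)]; exact Complex.exp_ne_zero _
end B

section C

lemma exp_half_log (x : ℝ) (hx : x < 1) :
    Complex.exp (((Real.log (1 - x) : ℂ) + Real.pi * Complex.I) * (1/2))
      = Complex.I * Real.sqrt (1 - x) := by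
  have h1x : (0:ℝ) < 1 - x := by linarith
  have h : ((Real.log (1-x):ℂ) + ↑Real.pi*Complex.I) * (1/2)
      = ((Real.log (1-x)/2 : ℝ):ℂ) + ((Real.pi/2 :ℝ):ℂ)*Complex.I := by push_cast; ring
  rw [h, Complex.exp_add, Complex.exp_mul_I, ← Complex.ofReal_cos, ← Complex.ofReal_sin,
    Real.cos_pi_div_two, Real.sin_pi_div_two]
  have hs : Real.sqrt (1-x) = Real.exp (Real.log (1-x)/2) := by
    rw [Real.sqrt_eq_rpow, Real.rpow_def_of_pos h1x]; ring_nf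
  rw [← Complex.ofReal_exp, ← hs]
  push_cast
  ring

lemma exp_half_log' (x : ℝ) (hx : x < 1) :
    Complex.exp (((Real.log (1 - x) : ℂ) - Real.pi * Complex.I) * (1/2))
      = -(Complex.I * Real.sqrt (1 - x)) := by
  have h1x : (0:ℝ) < 1 - x := by linarith
  have h : ((Real.log (1-x):ℂ) - ↑Real.pi*Complex.I) * (1/2)
      = ((Real.log (1-x)/2 : ℝ):ℂ) + ((-(Real.pi/2) :ℝ):ℂ)*Complex.I := by push_cast; ring
  rw [h, Complex.exp_add, Complex.exp_mul_I, ← Complex.ofReal_cos, ← Complex.ofReal_sin,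
    Real.cos_neg, Real.sin_neg, Real.cos_pi_div_two, Real.sin_pi_div_two]
  have hs : Real.sqrt (1-x) = Real.exp (Real.log (1-x)/2) := by
    rw [Real.sqrt_eq_rpow, Real.rpow_def_of_pos h1x]; ring_nf
  rw [← Complex.ofReal_exp, ← hs]
  push_cast
  ring

lemma abs_xm1 (x : ℝ) (hx : x < 1) : ‖(x:ℂ) - 1‖ = 1 - x := by
  have h : (x:ℂ) - 1 = ((x - 1 : ℝ) : ℂ) := by push_cast; ring
  rw [h, Complex.norm_real, Real.norm_eq_abs, abs_of_neg (by linarith : x - 1 < 0)]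
  ring

lemma sq1_tendsto_upper (x : ℝ) (hx : x < 1) :
    Tendsto (fun ε : ℝ => sq1 ((x:ℂ) + ε * Complex.I)) (𝓝[>] 0)
      (𝓝 (Complex.I * Real.sqrt (1 - x))) := by
  have hlog : Tendsto (fun ε : ℝ => Complex.log ((x:ℂ) + ε * Complex.I - 1)) (𝓝[>] 0)
      (𝓝 ((Real.log (1 - x) : ℂ) + Real.pi * Complex.I)) := by
    have h0 : Tendsto (fun ε : ℝ => (x:ℂ) + ε*Complex.I - 1) (𝓝[>] (0:ℝ))
        (𝓝[{z : ℂ | 0 ≤ z.im}] ((x:ℂ)-1)) := by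
      rw [tendsto_nhdsWithin_iff]
      constructor
      · have hc : Continuous (fun ε : ℝ => (x:ℂ) + ε*Complex.I - 1) := by continuity
        have h := hc.tendsto 0
        simp only [Complex.ofReal_zero, zero_mul, add_zero] at h
        simpa using h.mono_left nhdsWithin_le_nhds
      · filter_upwards [self_mem_nhdsWithin] with ε hε
        have hε' : (0:ℝ) < ε := hε
        simp [Set.mem_setOf_eq, le_of_lt hε']
    have hb := Complex.tendsto_log_nhdsWithin_im_nonneg_of_re_neg_of_im_zero
      (z := (x:ℂ) - 1) (by simp; linarith) (by simp)
    have h2 := hb.comp h0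
    rwa [abs_xm1 x hx] at h2
  have key : ∀ᶠ (ε : ℝ) in 𝓝[>] (0:ℝ), sq1 ((x:ℂ)+ε*Complex.I)
      = Complex.exp (Complex.log ((x:ℂ)+ε*Complex.I-1) * (1/2)) := by
    filter_upwards [self_mem_nhdsWithin] with ε hε
    have hε' : (0:ℝ) < ε := hε
    rw [sq1, Complex.cpow_def_of_ne_zero]
    intro hc
    have h3 := congrArg Complex.im hc
    simp at h3
    exact (ne_of_gt hε') h3
  rw [← exp_half_log x hx]
  apply Tendsto.congr' (key.mono fun ε h => h.symm)
  exact (Complex.continuous_exp.tendsto _).comp (hlog.mul_const _)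

lemma sq1_tendsto_lower (x : ℝ) (hx : x < 1) :
    Tendsto (fun ε : ℝ => sq1 ((x:ℂ) - ε * Complex.I)) (𝓝[>] 0)
      (𝓝 (-(Complex.I * Real.sqrt (1 - x)))) := by
  have hlog : Tendsto (fun ε : ℝ => Complex.log ((x:ℂ) - ε * Complex.I - 1)) (𝓝[>] 0)
      (𝓝 ((Real.log (1 - x) : ℂ) - Real.pi * Complex.I)) := by
    have h0 : Tendsto (fun ε : ℝ => (x:ℂ) - ε*Complex.I - 1) (𝓝[>] (0:ℝ))
        (𝓝[{z : ℂ | z.im < 0}] ((x:ℂ)-1)) := by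
      rw [tendsto_nhdsWithin_iff]
      constructor
      · have hc : Continuous (fun ε : ℝ => (x:ℂ) - ε*Complex.I - 1) := by continuity
        have h := hc.tendsto 0
        simp only [Complex.ofReal_zero, zero_mul, sub_zero] at h
        simpa using h.mono_left nhdsWithin_le_nhds
      · filter_upwards [self_mem_nhdsWithin] with ε hε
        have hε' : (0:ℝ) < ε := hε
        simp [Set.mem_setOf_eq, hε']
    have hb := Complex.tendsto_log_nhdsWithin_im_neg_of_re_neg_of_im_zero
      (z := (x:ℂ) - 1) (by simp; linarith) (by simp)
    have h2 := hb.comp h0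
    rwa [abs_xm1 x hx] at h2
  have key : ∀ᶠ (ε : ℝ) in 𝓝[>] (0:ℝ), sq1 ((x:ℂ)-ε*Complex.I)
      = Complex.exp (Complex.log ((x:ℂ)-ε*Complex.I-1) * (1/2)) := by
    filter_upwards [self_mem_nhdsWithin] with ε hε
    have hε' : (0:ℝ) < ε := hε
    rw [sq1, Complex.cpow_def_of_ne_zero]
    intro hc
    have h3 := congrArg Complex.im hc
    simp at h3
    exact (ne_of_gt hε') h3
  rw [← exp_half_log' x hx]
  apply Tendsto.congr' (key.mono fun ε h => h.symm)
  exact (Complex.continuous_exp.tendsto _).comp (hlog.mul_const _)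

end C
section D

lemma Ffun_tendsto_aux (β : ℂ) (f : ℝ → ℂ) (s₀ L : ℂ)
    (hmem : ∀ ε ∈ Set.Ioi (0:ℝ), f ε ∈ SlitPlane1)
    (hs : Tendsto (fun ε : ℝ => sq1 (f ε)) (𝓝[>] (0:ℝ)) (𝓝 s₀))
    (hd : Complex.I - s₀ ≠ 0)
    (hL : Tendsto Complex.log (𝓝[{z : ℂ | z.im < 0}] ((Complex.I + s₀)/(Complex.I - s₀)))
      (𝓝 L)) :
    Tendsto (fun ε : ℝ => Ffun β (f ε)) (𝓝[>] (0:ℝ))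
      (𝓝 (β ^ ((1:ℂ)/2) *
        Complex.exp (L * (Complex.log β / (2 * (Real.pi : ℂ) * Complex.I))))) := by
  have hw : Tendsto (fun ε : ℝ => wfun (f ε)) (𝓝[>] (0:ℝ))
      (𝓝[{z : ℂ | z.im < 0}] ((Complex.I + s₀)/(Complex.I - s₀))) := by
    rw [tendsto_nhdsWithin_iff]
    constructor
    · exact ((tendsto_const_nhds.add hs).div (tendsto_const_nhds.sub hs) hd)
    · filter_upwards [self_mem_nhdsWithin] with ε hε
      exact im_wfun_neg _ (hmem ε hε)
  have hlogw : Tendsto (fun ε : ℝ => Complex.log (wfun (f ε))) (𝓝[>] (0:ℝ)) (𝓝 L) :=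
    hL.comp hw
  have key : ∀ᶠ (ε : ℝ) in 𝓝[>] (0:ℝ), Ffun β (f ε)
      = β ^ ((1:ℂ)/2) * Complex.exp (Complex.log (wfun (f ε))
          * (Complex.log β / (2 * (Real.pi : ℂ) * Complex.I))) := by
    filter_upwards [self_mem_nhdsWithin] with ε hε
    rw [Ffun_eq, Complex.cpow_def_of_ne_zero (wfun_ne_zero _ (hmem ε hε))]
  apply Tendsto.congr' (key.mono fun ε h => h.symm)
  exact tendsto_const_nhds.mul
    ((Complex.continuous_exp.tendsto _).comp (hlogw.mul_const _))

lemma mem_slit_upper (x : ℝ) : ∀ ε ∈ Set.Ioi (0:ℝ), (x:ℂ) + ε * Complex.I ∈ SlitPlane1 := by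
  intro ε hε
  have hε' : (0:ℝ) < ε := hε
  simp [SlitPlane1, Set.mem_setOf_eq]
  intro h
  exact absurd h (ne_of_gt hε')

lemma mem_slit_lower (x : ℝ) : ∀ ε ∈ Set.Ioi (0:ℝ), (x:ℂ) - ε * Complex.I ∈ SlitPlane1 := by
  intro ε hε
  have hε' : (0:ℝ) < ε := hε
  simp [SlitPlane1, Set.mem_setOf_eq, sub_eq_add_neg]
  intro h
  exact absurd h (by positivity)

lemma tendsto_log_neg_real (r : ℝ) (hr : r < 0) :
    Tendsto Complex.log (𝓝[{z : ℂ | z.im < 0}] ((r:ℂ)))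
      (𝓝 ((Real.log r : ℂ) - (Real.pi:ℂ) * Complex.I)) := by
  have h := Complex.tendsto_log_nhdsWithin_im_neg_of_re_neg_of_im_zero
    (z := (r:ℂ)) (by simpa using hr) (by simp)
  simpa [Complex.norm_real, Real.norm_eq_abs, Real.log_abs] using h

lemma tendsto_log_pos_real (r : ℝ) (hr : 0 < r) :
    Tendsto Complex.log (𝓝[{z : ℂ | z.im < 0}] ((r:ℂ)))
      (𝓝 ((Real.log r : ℂ))) := by
  have hm : (r:ℂ) ∈ Complex.slitPlane := Or.inl (by simpa using hr)
  have h := (continuousAt_clog hm).tendsto.mono_left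
    (nhdsWithin_le_nhds (s := {z : ℂ | z.im < 0}))
  rwa [← Complex.ofReal_log (le_of_lt hr)] at h

lemma w0_eq (t : ℝ) (ht : (1:ℝ) - t ≠ 0) :
    (Complex.I + Complex.I*(t:ℂ))/(Complex.I - Complex.I*(t:ℂ)) = (((1+t)/(1-t) : ℝ) : ℂ) := by
  have h1 : Complex.I - Complex.I*(t:ℂ) = Complex.I * ((1:ℂ)-(t:ℂ)) := by ring
  have h2 : Complex.I + Complex.I*(t:ℂ) = Complex.I * ((1:ℂ)+(t:ℂ)) := by ring
  rw [h1, h2, mul_div_mul_left _ _ Complex.I_ne_zero]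
  push_cast
  ring

lemma w0_eq' (t : ℝ) (ht : (1:ℝ) + t ≠ 0) :
    (Complex.I + -(Complex.I*(t:ℂ)))/(Complex.I - -(Complex.I*(t:ℂ)))
      = (((1-t)/(1+t) : ℝ) : ℂ) := by
  have h1 : Complex.I - -(Complex.I*(t:ℂ)) = Complex.I * ((1:ℂ)+(t:ℂ)) := by ring
  have h2 : Complex.I + -(Complex.I*(t:ℂ)) = Complex.I * ((1:ℂ)-(t:ℂ)) := by ring
  rw [h1, h2, mul_div_mul_left _ _ Complex.I_ne_zero]
  push_cast
  ring

lemma prod_exp (β : ℂ) (hβ0 : β ≠ 0) (L1 L2 : ℂ) :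
    (β ^ ((1:ℂ)/2) * Complex.exp (L1 * (Complex.log β / (2 * (Real.pi:ℂ) * Complex.I)))) *
    (β ^ ((1:ℂ)/2) * Complex.exp (L2 * (Complex.log β / (2 * (Real.pi:ℂ) * Complex.I))))
      = β * Complex.exp ((L1 + L2) * (Complex.log β / (2 * (Real.pi:ℂ) * Complex.I))) := by
  have hb : β ^ ((1:ℂ)/2) * β ^ ((1:ℂ)/2) = β := by
    rw [← Complex.cpow_add _ _ hβ0]
    norm_num
  calc (β ^ ((1:ℂ)/2) * Complex.exp (L1 * (Complex.log β / (2 * (Real.pi:ℂ) * Complex.I)))) *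
      (β ^ ((1:ℂ)/2) * Complex.exp (L2 * (Complex.log β / (2 * (Real.pi:ℂ) * Complex.I))))
      = (β ^ ((1:ℂ)/2) * β ^ ((1:ℂ)/2)) *
        (Complex.exp (L1 * (Complex.log β / (2 * (Real.pi:ℂ) * Complex.I))) *
         Complex.exp (L2 * (Complex.log β / (2 * (Real.pi:ℂ) * Complex.I)))) := by ring
    _ = β * Complex.exp ((L1 + L2) * (Complex.log β / (2 * (Real.pi:ℂ) * Complex.I))) := by
        rw [hb, ← Complex.exp_add]
        ring_nf

lemma boundary_neg (β : ℂ) (hβ0 : β ≠ 0) (x : ℝ) (hx : x < 0) :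
    ∃ Fp Fm : ℂ,
      Tendsto (fun ε : ℝ => Ffun β ((x : ℂ) + ε * Complex.I))
        (nhdsWithin 0 (Set.Ioi 0)) (𝓝 Fp) ∧
      Tendsto (fun ε : ℝ => Ffun β ((x : ℂ) - ε * Complex.I))
        (nhdsWithin 0 (Set.Ioi 0)) (𝓝 Fm) ∧
      Fp * Fm = 1 := by
  set t : ℝ := Real.sqrt (1 - x) with htdef
  have ht0 : 0 < t := Real.sqrt_pos.mpr (by linarith)
  have ht1 : 1 < t := by
    have h := Real.sqrt_lt_sqrt (by norm_num : (0:ℝ) ≤ 1) (by linarith : (1:ℝ) < 1 - x)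
    simpa [htdef] using h
  have h1t : (1:ℝ) - t ≠ 0 := by linarith
  have h1t' : (1:ℝ) + t ≠ 0 := by linarith
  set c : ℂ := Complex.log β / (2 * (Real.pi:ℂ) * Complex.I) with hcdef
  set L1 : ℂ := (Real.log ((1+t)/(1-t)) : ℂ) - (Real.pi:ℂ) * Complex.I with hL1
  set L2 : ℂ := (Real.log ((1-t)/(1+t)) : ℂ) - (Real.pi:ℂ) * Complex.I with hL2
  refine ⟨β ^ ((1:ℂ)/2) * Complex.exp (L1 * c), β ^ ((1:ℂ)/2) * Complex.exp (L2 * c), ?_, ?_, ?_⟩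
  · apply Ffun_tendsto_aux β _ (Complex.I * (t:ℂ)) L1 (mem_slit_upper x)
      (sq1_tendsto_upper x (by linarith))
    · rw [show Complex.I - Complex.I * (t:ℂ) = Complex.I * ((1:ℂ)-(t:ℂ)) by ring]
      apply mul_ne_zero Complex.I_ne_zero
      intro hc
      have : (t:ℂ) = 1 := by linear_combination -hc
      have : t = (1:ℝ) := by exact_mod_cast this
      linarith
    · rw [w0_eq t h1t]
      exact tendsto_log_neg_real _ (div_neg_of_pos_of_neg (by linarith) (by linarith))
  · apply Ffun_tendsto_aux β _ (-(Complex.I * (t:ℂ))) L2 (mem_slit_lower x)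
      (sq1_tendsto_lower x (by linarith))
    · rw [show Complex.I - -(Complex.I * (t:ℂ)) = Complex.I * ((1:ℂ)+(t:ℂ)) by ring]
      apply mul_ne_zero Complex.I_ne_zero
      intro hc
      have : (t:ℂ) = -1 := by linear_combination hc
      have : t = (-1:ℝ) := by exact_mod_cast this
      linarith
    · rw [w0_eq' t h1t']
      exact tendsto_log_neg_real _ (div_neg_of_neg_of_pos (by linarith) (by linarith))
  · rw [prod_exp β hβ0]
    have hsum : L1 + L2 = -(2 * (Real.pi:ℂ) * Complex.I) := by
      rw [hL1, hL2]
      have : Real.log ((1-t)/(1+t)) = -Real.log ((1+t)/(1-t)) := by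
        rw [show (1-t)/(1+t) = ((1+t)/(1-t))⁻¹ by rw [inv_div], Real.log_inv]
      rw [this]
      push_cast
      ring
    rw [hsum]
    have hpi : (2 * (Real.pi:ℂ) * Complex.I) ≠ 0 := by
      simp [Real.pi_ne_zero, Complex.I_ne_zero]
    rw [show -(2 * (Real.pi:ℂ) * Complex.I) * (Complex.log β / (2 * (Real.pi:ℂ) * Complex.I))
        = -Complex.log β by field_simp]
    rw [Complex.exp_neg, Complex.exp_log hβ0]
    exact mul_inv_cancel₀ hβ0

lemma boundary_pos (β : ℂ) (hβ0 : β ≠ 0) (x : ℝ) (hx0 : 0 < x) (hx : x < 1) :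
    ∃ Fp Fm : ℂ,
      Tendsto (fun ε : ℝ => Ffun β ((x : ℂ) + ε * Complex.I))
        (nhdsWithin 0 (Set.Ioi 0)) (𝓝 Fp) ∧
      Tendsto (fun ε : ℝ => Ffun β ((x : ℂ) - ε * Complex.I))
        (nhdsWithin 0 (Set.Ioi 0)) (𝓝 Fm) ∧
      Fp * Fm = β := by
  set t : ℝ := Real.sqrt (1 - x) with htdef
  have ht0 : 0 < t := Real.sqrt_pos.mpr (by linarith)
  have ht1 : t < 1 := by
    have h := Real.sqrt_lt_sqrt (by linarith : (0:ℝ) ≤ 1 - x) (by linarith : 1 - x < 1)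
    simpa [htdef] using h
  have h1t : (1:ℝ) - t ≠ 0 := by linarith
  have h1t' : (1:ℝ) + t ≠ 0 := by linarith
  set c : ℂ := Complex.log β / (2 * (Real.pi:ℂ) * Complex.I) with hcdef
  set L1 : ℂ := (Real.log ((1+t)/(1-t)) : ℂ) with hL1
  set L2 : ℂ := (Real.log ((1-t)/(1+t)) : ℂ) with hL2
  refine ⟨β ^ ((1:ℂ)/2) * Complex.exp (L1 * c), β ^ ((1:ℂ)/2) * Complex.exp (L2 * c), ?_, ?_, ?_⟩
  · apply Ffun_tendsto_aux β _ (Complex.I * (t:ℂ)) L1 (mem_slit_upper x)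
      (sq1_tendsto_upper x (by linarith))
    · rw [show Complex.I - Complex.I * (t:ℂ) = Complex.I * ((1:ℂ)-(t:ℂ)) by ring]
      apply mul_ne_zero Complex.I_ne_zero
      intro hc
      have : (t:ℂ) = 1 := by linear_combination -hc
      have : t = (1:ℝ) := by exact_mod_cast this
      linarith
    · rw [w0_eq t h1t]
      exact tendsto_log_pos_real _ (div_pos (by linarith) (by linarith))
  · apply Ffun_tendsto_aux β _ (-(Complex.I * (t:ℂ))) L2 (mem_slit_lower x)
      (sq1_tendsto_lower x (by linarith))
    · rw [show Complex.I - -(Complex.I * (t:ℂ)) = Complex.I * ((1:ℂ)+(t:ℂ)) by ring]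
      apply mul_ne_zero Complex.I_ne_zero
      intro hc
      have : (t:ℂ) = -1 := by linear_combination hc
      have : t = (-1:ℝ) := by exact_mod_cast this
      linarith
    · rw [w0_eq' t h1t']
      exact tendsto_log_pos_real _ (div_pos (by linarith) (by linarith))
  · rw [prod_exp β hβ0]
    have hsum : L1 + L2 = 0 := by
      rw [hL1, hL2]
      have : Real.log ((1-t)/(1+t)) = -Real.log ((1+t)/(1-t)) := by
        rw [show (1-t)/(1+t) = ((1+t)/(1-t))⁻¹ by rw [inv_div], Real.log_inv]
      rw [this]
      push_cast
      ring
    rw [hsum, zero_mul, Complex.exp_zero, mul_one]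

end D

section E

lemma log_neg_of_im_neg (w : ℂ) (hw : w.im < 0) :
    Complex.log (-w) = Complex.log w + (Real.pi:ℂ) * Complex.I := by
  apply Complex.ext
  · simp [Complex.log_re]
  · simp [Complex.log_im, Complex.arg_neg_eq_arg_add_pi_of_im_neg hw]

lemma Ffun_eq_exp (β : ℂ) (hβ0 : β ≠ 0) (ζ : ℂ) (h : ζ ∈ SlitPlane1) :
    Ffun β ζ = Complex.exp ((Complex.log (wfun ζ) + (Real.pi:ℂ) * Complex.I)
      * (Complex.log β / (2 * (Real.pi:ℂ) * Complex.I))) := by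
  have hw0 : wfun ζ ≠ 0 := wfun_ne_zero ζ h
  rw [Ffun_eq, Complex.cpow_def_of_ne_zero hβ0, Complex.cpow_def_of_ne_zero hw0,
    ← Complex.exp_add]
  congr 1
  have hpi : ((Real.pi:ℂ)) ≠ 0 := by exact_mod_cast Real.pi_ne_zero
  field_simp
  ring

lemma neg_wfun_eq (ζ : ℂ) (h : ζ ∈ SlitPlane1) :
    -(wfun ζ) = 1 + 2 * Complex.I / (sq1 ζ - Complex.I) := by
  have hd : Complex.I - sq1 ζ ≠ 0 := denom_ne_zero ζ h
  have hd' : sq1 ζ - Complex.I ≠ 0 := fun hc => hd (by linear_combination -hc)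
  rw [wfun]
  field_simp
  ring

lemma abs_sq1 (ζ : ℂ) (h : ζ ∈ SlitPlane1) :
    ‖sq1 ζ‖ = Real.sqrt (‖ζ - 1‖) := by
  have hz : ζ - 1 ≠ 0 := Complex.slitPlane_ne_zero (mem_slitPlane_of_mem ζ h)
  have hsq : sq1 ζ * sq1 ζ = ζ - 1 := by
    rw [sq1, ← Complex.cpow_add _ _ hz]
    norm_num
  have : ‖sq1 ζ‖ * ‖sq1 ζ‖ = ‖ζ - 1‖ := by
    rw [← norm_mul, hsq]
  rw [← this, Real.sqrt_mul_self (norm_nonneg _)]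

lemma Ffun_asymp (β : ℂ) (hβ0 : β ≠ 0) :
    ∃ C R : ℝ, ∀ ζ ∈ SlitPlane1, R ≤ ‖ζ‖ →
      ‖Ffun β ζ - 1‖ ≤ C / Real.sqrt (‖ζ‖) := by
  set c : ℂ := Complex.log β / (2 * (Real.pi:ℂ) * Complex.I) with hcdef
  refine ⟨12 * ‖c‖ + 1, max 64 ((6 * ‖c‖ + 1)^2), ?_⟩
  intro ζ hζ hR
  have h64 : (64:ℝ) ≤ ‖ζ‖ := le_trans (le_max_left _ _) hR
  have habs0 : (0:ℝ) ≤ ‖ζ‖ := norm_nonneg _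
  set a : ℝ := ‖ζ‖ with hadef
  set b : ℝ := Real.sqrt a with hbdef
  have hb8 : (8:ℝ) ≤ b := by
    rw [hbdef, show (8:ℝ) = Real.sqrt 64 by
      rw [show (64:ℝ) = 8^2 by norm_num, Real.sqrt_sq (by norm_num)]]
    exact Real.sqrt_le_sqrt h64
  have hb0 : (0:ℝ) < b := by linarith
  -- |s - I| ≥ b/2 + 1
  have hsI : b/2 + 1 ≤ ‖sq1 ζ - Complex.I‖ := by
    have h1 : Real.sqrt (a - 1) ≤ ‖sq1 ζ‖ + 0 := by
      rw [abs_sq1 ζ hζ, add_zero]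
      apply Real.sqrt_le_sqrt
      have := norm_sub_norm_le ζ (1:ℂ)
      simp only [norm_one] at this
      linarith
    have h2 : b/2 + 2 ≤ Real.sqrt (a - 1) := by
      rw [Real.le_sqrt (by positivity) (by linarith)]
      have hb2 : b^2 = a := Real.sq_sqrt habs0
      nlinarith
    have h3 := norm_sub_norm_le (sq1 ζ) (Complex.I)
    simp only [Complex.norm_I] at h3
    linarith
  -- |u| ≤ 4/b ≤ 1/2
  set u : ℂ := 2 * Complex.I / (sq1 ζ - Complex.I) with hudef
  have hu : ‖u‖ ≤ 4 / b := by
    rw [hudef, norm_div, norm_mul, Complex.norm_I, Complex.norm_two, mul_one]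
    rw [div_le_div_iff₀ (lt_of_lt_of_le (by positivity) hsI) hb0]
    nlinarith [hsI]
  have hu2 : ‖u‖ ≤ 1/2 := le_trans hu (by
    rw [div_le_div_iff₀ hb0 (by norm_num)]
    linarith)
  -- |D| ≤ 6/b
  have hD : ‖Complex.log (wfun ζ) + (Real.pi:ℂ) * Complex.I‖ ≤ 6 / b := by
    have him := im_wfun_neg ζ hζ
    have hlog : Complex.log (wfun ζ) + (Real.pi:ℂ) * Complex.I = Complex.log (1 + u) := by
      rw [← log_neg_of_im_neg _ him, neg_wfun_eq ζ hζ, hudef]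
    rw [hlog]
    have := Complex.norm_log_one_add_half_le_self (z := u) (by
      exact hu2)
    calc ‖Complex.log (1 + u)‖ ≤ 3/2 * ‖u‖ := this
      _ ≤ 3/2 * (4/b) := by nlinarith
      _ = 6/b := by ring
  -- |D * c| ≤ 1
  have hbc : 6 * ‖c‖ + 1 ≤ b := by
    rw [hbdef, show 6 * ‖c‖ + 1 = Real.sqrt ((6 * ‖c‖ + 1)^2) by
      rw [Real.sqrt_sq (by positivity)]]
    exact Real.sqrt_le_sqrt (le_trans (le_max_right _ _) hR)
  have hDc : ‖(Complex.log (wfun ζ) + (Real.pi:ℂ) * Complex.I) * c‖ ≤ 1 := by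
    rw [norm_mul]
    have hc0 : (0:ℝ) ≤ ‖c‖ := norm_nonneg _
    calc ‖Complex.log (wfun ζ) + (Real.pi:ℂ) * Complex.I‖ * ‖c‖
        ≤ (6/b) * ‖c‖ := by nlinarith
      _ ≤ 1 := by
          rw [div_mul_eq_mul_div, div_le_one hb0]
          nlinarith
  -- conclude
  rw [Ffun_eq_exp β hβ0 ζ hζ]
  calc ‖Complex.exp ((Complex.log (wfun ζ) + (Real.pi:ℂ) * Complex.I) * c) - 1‖
      ≤ 2 * ‖(Complex.log (wfun ζ) + (Real.pi:ℂ) * Complex.I) * c‖ :=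
        Complex.norm_exp_sub_one_le hDc
    _ ≤ (12 * ‖c‖ + 1) / b := by
        rw [norm_mul]
        have hc0 : (0:ℝ) ≤ ‖c‖ := norm_nonneg _
        have h6 : ‖Complex.log (wfun ζ) + (Real.pi:ℂ) * Complex.I‖ * ‖c‖
            ≤ (6/b) * ‖c‖ := mul_le_mul_of_nonneg_right hD hc0
        calc 2 * (‖Complex.log (wfun ζ) + (Real.pi:ℂ) * Complex.I‖ * ‖c‖)
            ≤ 2 * ((6/b) * ‖c‖) := by linarith
          _ = (12 * ‖c‖) / b := by ring
          _ ≤ (12 * ‖c‖ + 1) / b := by gcongr; linarith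

end E


/-- The Szegő-type function `F_β`: holomorphic and non-vanishing on the
slit plane, multiplicative boundary relations `F_{β+}F_{β−} = 1` on `(−∞,0)` and `= β` on
`(0,1)`, and `F_β(ζ) = 1 + O(ζ^{−1/2})` at infinity. -/
theorem Ffun_properties (β : ℂ) (hβ : ¬(β.im = 0 ∧ β.re ≤ 0)) :
    DifferentiableOn ℂ (Ffun β) SlitPlane1 ∧
    (∀ ζ ∈ SlitPlane1, Ffun β ζ ≠ 0) ∧
    (∀ x : ℝ, x < 0 → ∃ Fp Fm : ℂ,
      Tendsto (fun ε : ℝ => Ffun β ((x : ℂ) + ε * Complex.I))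
        (nhdsWithin 0 (Set.Ioi 0)) (𝓝 Fp) ∧
      Tendsto (fun ε : ℝ => Ffun β ((x : ℂ) - ε * Complex.I))
        (nhdsWithin 0 (Set.Ioi 0)) (𝓝 Fm) ∧
      Fp * Fm = 1) ∧
    (∀ x : ℝ, 0 < x → x < 1 → ∃ Fp Fm : ℂ,
      Tendsto (fun ε : ℝ => Ffun β ((x : ℂ) + ε * Complex.I))
        (nhdsWithin 0 (Set.Ioi 0)) (𝓝 Fp) ∧
      Tendsto (fun ε : ℝ => Ffun β ((x : ℂ) - ε * Complex.I))
        (nhdsWithin 0 (Set.Ioi 0)) (𝓝 Fm) ∧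
      Fp * Fm = β) ∧
    (∃ C R : ℝ, ∀ ζ ∈ SlitPlane1, R ≤ ‖ζ‖ →
      ‖Ffun β ζ - 1‖ ≤ C / Real.sqrt (‖ζ‖)) := by
  have hβ0 : β ≠ 0 := by
    intro h
    exact hβ (by simp [h])
  refine ⟨Ffun_diff β, Ffun_ne_zero β hβ0, fun x hx => boundary_neg β hβ0 x hx,
    fun x hx0 hx1 => boundary_pos β hβ0 x hx0 hx1, Ffun_asymp β hβ0⟩

end
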